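/- Let Q be a Prüfer q-group acting on an abelian group A such that Q acts trivially on [A, Q] (the subgroup generated by all a·x − a). Then for every a ∈ A, the subgroup [a, Q] = {a·x − a | x ∈ Q} is either trivial or a divisible q-group whose elements all have q-power order. -/

import Mathlib

/-- The Prüfer (quasicyclic) `q`-group, realized as the subgroup of `ℚ/ℤ` (here
`AddCircle (1 : ℚ)`) consisting of the elements of `q`-power order. -/
def pruferAddSubgroup (q : ℕ) : AddSubgroup (AddCircle (1 : ℚ)) where
  carrier := {x | ∃ n : ℕ, q ^ n • x = 0}
  zero_mem' := ⟨0, smul_zero _⟩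
  add_mem' := by
    rintro a b ⟨n, hn⟩ ⟨m, hm⟩
    refine ⟨n + m, ?_⟩
    rw [smul_add, pow_add, mul_smul, smul_comm (q ^ n) (q ^ m) a, hn, smul_zero, mul_comm,
      mul_smul, smul_comm (q ^ m) (q ^ n) b, hm, smul_zero, zero_add]
  neg_mem' := by
    rintro a ⟨n, hn⟩
    exact ⟨n, by rw [smul_neg, hn, neg_zero]⟩

/-- The Prüfer `q`-group is divisible. -/
lemma pruferAddSubgroup_divisible (q : ℕ) (hq : q.Prime) (p : pruferAddSubgroup q)
    (n : ℕ) (hn : n ≠ 0) : ∃ c : pruferAddSubgroup q, n • c = p := by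
  obtain ⟨m, hm⟩ := p.2
  -- replace m by m+1 so that q^M > 1
  set M := m + 1 with hM
  have hMp : q ^ M • (p : AddCircle (1 : ℚ)) = 0 := by
    rw [hM, pow_succ, mul_comm, mul_smul, hm, smul_zero]
  have hq1 : 1 < q ^ M := Nat.one_lt_pow (by omega) hq.one_lt
  set k := n.factorization q with hk
  set r := n / q ^ k with hr
  have hkr : q ^ k * r = n := Nat.ordProj_mul_ordCompl_eq_self n q
  have hqr : ¬ q ∣ r := Nat.not_dvd_ordCompl hq hn
  have hcop : Nat.Coprime r (q ^ M) :=
    Nat.Coprime.pow_right M ((hq.coprime_iff_not_dvd.2 hqr).symm)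
  obtain ⟨s, -, hs⟩ := Nat.exists_mul_mod_eq_one_of_coprime hcop hq1
  -- r * s = q^M * t + 1
  have hdm := Nat.div_add_mod (r * s) (q ^ M)
  rw [hs] at hdm
  set t := r * s / q ^ M with ht
  have hrs : r * s = q ^ M * t + 1 := by omega
  -- divide p by q^k inside AddCircle
  set c0 : AddCircle (1 : ℚ) := DivisibleBy.div (p : AddCircle (1 : ℚ)) ((q : ℤ) ^ k) with hc0
  have hqk0 : ((q : ℤ) ^ k) ≠ 0 := pow_ne_zero _ (by exact_mod_cast hq.pos.ne')
  have hc0p : (q ^ k : ℕ) • c0 = (p : AddCircle (1 : ℚ)) := by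
    have := DivisibleBy.div_cancel (p : AddCircle (1 : ℚ)) hqk0
    rwa [← natCast_zsmul, Nat.cast_pow] 
  have hc0mem : c0 ∈ pruferAddSubgroup q := by
    refine ⟨M + k, ?_⟩
    rw [pow_add, mul_smul, hc0p, hMp]
  refine ⟨s • ⟨c0, hc0mem⟩, ?_⟩
  apply Subtype.ext
  push_cast
  have h1 : n * s = (r * s) * q ^ k := by rw [← hkr]; ring
  rw [smul_smul, h1, mul_smul, hc0p, hrs, add_smul, one_smul, mul_comm (q ^ M) t, mul_smul, hMp,
    smul_zero, zero_add]

/-- If a Prüfer `q`-group `Q` acts on an abelian group `A`, acting trivially on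
`[A, Q]`, then for each `a ∈ A` the subgroup `[a, Q]` generated by
`{x • a - a | x ∈ Q}` is trivial or a divisible group all of whose elements have
`q`-power order. -/
theorem prufer_commutator_divisible (q : ℕ) (hq : q.Prime) (Q : Type*) [Group Q]
    (hQ : Nonempty (Q ≃* Multiplicative (pruferAddSubgroup q)))
    (A : Type*) [AddCommGroup A] [DistribMulAction Q A]
    (htriv : ∀ y : Q, ∀ b ∈ AddSubgroup.closure {b : A | ∃ (x : Q) (a : A), b = x • a - a},
      y • b = b)
    (a : A) :
    AddSubgroup.closure {b : A | ∃ x : Q, b = x • a - a} = ⊥ ∨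
      ((∀ b ∈ AddSubgroup.closure {b : A | ∃ x : Q, b = x • a - a}, ∀ n : ℕ, n ≠ 0 →
          ∃ c ∈ AddSubgroup.closure {b : A | ∃ x : Q, b = x • a - a}, n • c = b) ∧
        (∀ b ∈ AddSubgroup.closure {b : A | ∃ x : Q, b = x • a - a},
          ∃ m : ℕ, q ^ m • b = 0)) := by
  obtain ⟨e⟩ := hQ
  set S : Set A := {b : A | ∃ x : Q, b = x • a - a} with hSdef
  -- the map x ↦ x • a - a is a homomorphism
  have hf : ∀ x y : Q, (x * y) • a - a = (x • a - a) + (y • a - a) := by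
    intro x y
    have h1 : x • (y • a - a) = y • a - a :=
      htriv x _ (AddSubgroup.subset_closure ⟨y, a, rfl⟩)
    have h2 : x • (y • a) - x • a = y • a - a := by rw [← smul_sub]; exact h1
    have h3 : x • (y • a) = y • a - a + x • a := by
      rw [← h2]; abel
    rw [mul_smul, h3]; abel
  have hzero : (1 : Q) • a - a = 0 := by rw [one_smul, sub_self]
  have hpow : ∀ (x : Q) (k : ℕ), x ^ k • a - a = k • (x • a - a) := by
    intro x k
    induction k with
    | zero => simpa using hzero
    | succ k ih => rw [pow_succ, hf, ih, succ_nsmul]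
  -- S is itself a subgroup
  have hmemS : ∀ b ∈ AddSubgroup.closure S, ∃ x : Q, b = x • a - a := by
    intro b hb
    let T : AddSubgroup A :=
      { carrier := S
        zero_mem' := ⟨1, hzero.symm⟩
        add_mem' := by rintro b c ⟨x, rfl⟩ ⟨y, rfl⟩; exact ⟨x * y, (hf x y).symm⟩
        neg_mem' := by
          rintro b ⟨x, rfl⟩
          have h4 := hf x⁻¹ x
          rw [inv_mul_cancel, hzero] at h4
          exact ⟨x⁻¹, (eq_neg_iff_add_eq_zero.mpr h4.symm).symm⟩ }
    exact (AddSubgroup.closure_le T).2 le_rfl hb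
  refine Or.inr ⟨?_, ?_⟩
  · -- divisibility
    rintro b hb n hn
    obtain ⟨x, rfl⟩ := hmemS b hb
    obtain ⟨c, hc⟩ := pruferAddSubgroup_divisible q hq (Multiplicative.toAdd (e x)) n hn
    set y : Q := e.symm (Multiplicative.ofAdd c) with hy
    have hyx : y ^ n = x := by
      apply e.injective
      rw [map_pow, hy, MulEquiv.apply_symm_apply]
      rw [← ofAdd_nsmul, hc]
      simp
    refine ⟨y • a - a, AddSubgroup.subset_closure ⟨y, rfl⟩, ?_⟩
    rw [← hpow, hyx]
  · -- q-power torsion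
    rintro b hb
    obtain ⟨x, rfl⟩ := hmemS b hb
    obtain ⟨m, hm⟩ := (Multiplicative.toAdd (e x)).2
    refine ⟨m, ?_⟩
    have hx1 : x ^ q ^ m = 1 := by
      apply e.injective
      rw [map_pow, map_one]
      have : (q ^ m) • Multiplicative.toAdd (e x) = 0 := Subtype.ext hm
      rw [← ofAdd_toAdd (e x), ← ofAdd_nsmul, this, ofAdd_zero]
    rw [← hpow, hx1, hzero]
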